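/- (Proposition 1, finite form.) Let X and Y be finite nonempty types, let D_1, …, D_k be probability distributions on X × Y, and let λ be in the (k−1)-simplex. Suppose p*_λ is a conditional model minimizing L(·, D_λ) over all conditional models, and for each i, p*_i is a conditional model minimizing L(·, D_i) over all conditional models. Then for every x with D_λ(x) > 0 and every y ∈ Y, p*_λ(y|x) = Σ_{i : D_i(x) > 0} λ_i′(x) · p*_i(y|x), where λ_i′(x) = λ_i D_i(x) / Σ_{j=1}^k λ_j D_j(x); that is, the minimizer of the λ-weighted pre-training loss is, on the support of the mixture, the λ′(x)-weighted combination of the per-domain loss minimizers (data experts). -/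

import Mathlib

open Finset

/-- The x-marginal of a distribution on `X × Y`. -/
noncomputable def marginal {X Y : Type*} [Fintype Y] (D : X × Y → ℝ) (x : X) : ℝ :=
  ∑ y, D (x, y)

/-- A conditional model: strictly positive, normalized over `y` for each `x`. -/
def IsCondModel {X Y : Type*} [Fintype Y] (p : X × Y → ℝ) : Prop :=
  (∀ q, 0 < p q) ∧ ∀ x : X, ∑ y, p (x, y) = 1

/-- Cross-entropy loss of a conditional model `p` under a distribution `D` on `X × Y`. -/
noncomputable def xentLoss {X Y : Type*} [Fintype X] [Fintype Y] (p D : X × Y → ℝ) : ℝ :=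
  -∑ q : X × Y, D q * Real.log (p q)

lemma ratio_eq {X Y : Type*} [Fintype X] [Fintype Y] (D p : X × Y → ℝ)
    (hp : IsCondModel p)
    (hmin : ∀ q, IsCondModel q → xentLoss p D ≤ xentLoss q D)
    (x : X) (y1 y2 : Y) :
    D (x, y1) * p (x, y2) = D (x, y2) * p (x, y1) := by
  classical
  by_cases hy : y1 = y2
  · subst hy; ring
  obtain ⟨hpos, hsum⟩ := hp
  set c : X × Y → ℝ := fun r => (if r = (x,y1) then (1:ℝ) else 0) - (if r = (x,y2) then 1 else 0)
    with hc
  set Q : ℝ → X × Y → ℝ := fun t r => p r + t * c r with hQ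
  have hQ0 : Q 0 = p := by funext r; simp [hQ]
  have hε : (0:ℝ) < min (p (x,y1)) (p (x,y2)) := lt_min (hpos _) (hpos _)
  have hcm : ∀ t : ℝ, |t| < min (p (x,y1)) (p (x,y2)) → IsCondModel (Q t) := by
    intro t ht
    rcases abs_lt.1 ht with ⟨h1, h2⟩
    rw [neg_lt, lt_min_iff] at h1
    rw [lt_min_iff] at h2
    constructor
    · intro r
      by_cases h1' : r = (x, y1)
      · have hcr : c r = 1 := by
          simp [hc, h1', Prod.ext_iff, hy]
        have := h1.1
        show 0 < p r + t * c r
        rw [hcr, h1']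
        linarith
      by_cases h2' : r = (x, y2)
      · have hcr : c r = -1 := by
          simp [hc, h1', h2', Prod.ext_iff, Ne.symm (hy : y1 ≠ y2)]
        have := h2.2
        show 0 < p r + t * c r
        rw [hcr, h2']
        linarith
      · have hcr : c r = 0 := by simp [hc, h1', h2']
        show 0 < p r + t * c r
        rw [hcr]
        simpa using hpos r
    · intro x'
      have hsum1 : ∀ (y0 : Y), ∑ y', (if (x', y') = (x, y0) then (1:ℝ) else 0)
          = if x' = x then 1 else 0 := by
        intro y0
        by_cases hx : x' = x
        · subst hx
          simp [Prod.ext_iff]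
        · simp [Prod.ext_iff, hx]
      have : ∑ y', c (x', y') = 0 := by
        simp only [hc, Finset.sum_sub_distrib, hsum1]
        ring
      simp only [hQ, Finset.sum_add_distrib, ← Finset.mul_sum, this, hsum x', mul_zero, add_zero]
  -- derivative
  have hderiv : HasDerivAt (fun t => xentLoss (Q t) D)
      (-∑ r : X × Y, D r * ((1 * c r) / (p r + 0 * c r))) 0 := by
    have : ∀ t, xentLoss (Q t) D = -∑ r : X × Y, D r * Real.log (p r + t * c r) := by
      intro t; rfl
    simp only [this]
    apply HasDerivAt.neg
    apply HasDerivAt.fun_sum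
    intro r _
    have h1 : HasDerivAt (fun t : ℝ => p r + t * c r) (1 * c r) 0 :=
      ((hasDerivAt_id (0:ℝ)).mul_const (c r)).const_add (p r)
    have hne : p r + 0 * c r ≠ 0 := by simp; exact (hpos r).ne'
    exact (h1.log hne).const_mul (D r)
  have hloc : IsLocalMin (fun t => xentLoss (Q t) D) 0 := by
    filter_upwards [Metric.ball_mem_nhds (0:ℝ) hε] with t ht
    rw [Metric.mem_ball, Real.dist_eq, sub_zero] at ht
    have := hmin (Q t) (hcm t ht)
    simpa [hQ0] using this
  have hzero := hloc.hasDerivAt_eq_zero hderiv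
  have hsimp : ∀ r : X × Y, D r * ((1 * c r) / (p r + 0 * c r)) =
      (if r = (x,y1) then D r / p r else 0) - (if r = (x,y2) then D r / p r else 0) := by
    intro r
    simp only [hc, one_mul, zero_mul, add_zero]
    split_ifs <;> ring
  rw [neg_eq_zero] at hzero
  simp only [hsimp, Finset.sum_sub_distrib, Finset.sum_ite_eq' Finset.univ,
    Finset.mem_univ, if_true] at hzero
  have h12 : D (x,y1) / p (x,y1) = D (x,y2) / p (x,y2) := by linarith
  rw [div_eq_div_iff (hpos _).ne' (hpos _).ne'] at h12
  linarith [h12]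

lemma cond_eq {X Y : Type*} [Fintype X] [Fintype Y] (D p : X × Y → ℝ)
    (hp : IsCondModel p)
    (hmin : ∀ q, IsCondModel q → xentLoss p D ≤ xentLoss q D)
    (x : X) (y : Y) : p (x, y) * marginal D x = D (x, y) := by
  have h : ∀ y2, D (x, y2) * p (x, y) = D (x, y) * p (x, y2) :=
    fun y2 => ratio_eq D p hp hmin x y2 y
  have : marginal D x * p (x, y) = D (x, y) * ∑ y2, p (x, y2) := by
    rw [marginal, Finset.sum_mul, Finset.mul_sum]
    exact Finset.sum_congr rfl fun y2 _ => h y2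
  rw [hp.2 x, mul_one] at this
  linarith

theorem mixture_minimizer_eq_weighted_experts
    {X Y : Type*} [Fintype X] [Fintype Y] [Nonempty X] [Nonempty Y]
    {k : ℕ} (D : Fin k → X × Y → ℝ)
    (hD0 : ∀ i q, 0 ≤ D i q) (hD1 : ∀ i, ∑ q : X × Y, D i q = 1)
    (w : Fin k → ℝ) (hw0 : ∀ i, 0 ≤ w i) (hw1 : ∑ i, w i = 1)
    (pmix : X × Y → ℝ) (hpmix : IsCondModel pmix)
    (hpmixMin : ∀ q : X × Y → ℝ, IsCondModel q →
      xentLoss pmix (fun r => ∑ i, w i * D i r) ≤ xentLoss q (fun r => ∑ i, w i * D i r))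
    (pexp : Fin k → X × Y → ℝ) (hpexp : ∀ i, IsCondModel (pexp i))
    (hpexpMin : ∀ i, ∀ q : X × Y → ℝ, IsCondModel q →
      xentLoss (pexp i) (D i) ≤ xentLoss q (D i)) :
    ∀ x : X, 0 < marginal (fun r => ∑ i, w i * D i r) x → ∀ y : Y,
      pmix (x, y) =
        ∑ i ∈ Finset.univ.filter (fun i => 0 < marginal (D i) x),
          (w i * marginal (D i) x / ∑ j, w j * marginal (D j) x) * pexp i (x, y) := by
  classical
  intro x hx y
  set Dmix : X × Y → ℝ := fun r => ∑ i, w i * D i r with hDmix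
  have hM : marginal Dmix x = ∑ j, w j * marginal (D j) x := by
    simp only [marginal, hDmix, Finset.mul_sum]
    rw [Finset.sum_comm]
  have hMpos : 0 < marginal Dmix x := hx
  have hmixeq : pmix (x, y) * marginal Dmix x = Dmix (x, y) :=
    cond_eq Dmix pmix hpmix hpmixMin x y
  have hexpeq : ∀ i, pexp i (x, y) * marginal (D i) x = D i (x, y) :=
    fun i => cond_eq (D i) (pexp i) (hpexp i) (hpexpMin i) x y
  -- i not in filter: marginal (D i) x = 0 hence D i (x,y) = 0
  have hmargnn : ∀ i, 0 ≤ marginal (D i) x := fun i =>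
    Finset.sum_nonneg fun y' _ => hD0 i (x, y')
  have hzero : ∀ i, ¬ (0 < marginal (D i) x) → D i (x, y) = 0 := by
    intro i hi
    have hm0 : marginal (D i) x = 0 := le_antisymm (not_lt.1 hi) (hmargnn i)
    have : ∀ y' ∈ (Finset.univ : Finset Y), D i (x, y') = 0 :=
      (Finset.sum_eq_zero_iff_of_nonneg (fun y' _ => hD0 i (x, y'))).1 hm0
    exact this y (Finset.mem_univ y)
  have hRHS : ∑ i ∈ Finset.univ.filter (fun i => 0 < marginal (D i) x),
      (w i * marginal (D i) x / ∑ j, w j * marginal (D j) x) * pexp i (x, y)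
      = (∑ i, w i * D i (x, y)) / marginal Dmix x := by
    rw [hM, Finset.sum_div]
    rw [← Finset.sum_filter_add_sum_filter_not Finset.univ (fun i => 0 < marginal (D i) x)
      (fun i => w i * D i (x, y) / (∑ j, w j * marginal (D j) x))]
    have h2 : ∑ i ∈ Finset.univ.filter (fun i => ¬ 0 < marginal (D i) x),
        w i * D i (x, y) / (∑ j, w j * marginal (D j) x) = 0 := by
      apply Finset.sum_eq_zero
      intro i hi
      rw [Finset.mem_filter] at hi
      rw [hzero i hi.2]
      ring
    rw [h2, add_zero]
    apply Finset.sum_congr rfl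
    intro i hi
    rw [Finset.mem_filter] at hi
    rw [← hexpeq i]
    field_simp
  rw [hRHS]
  have : Dmix (x, y) = ∑ i, w i * D i (x, y) := rfl
  rw [← this, ← hmixeq]
  field_simp
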